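/- Let c, k, ℓ be positive integers with ℓ < c·(k−1). Then the relation U(c,k,ℓ) is reconfigurable: its reconfiguration graph is connected, i.e. any tuple of U(c,k,ℓ) can be transformed into any other by changing one coordinate at a time while remaining inside U(c,k,ℓ) at every step. -/

import Mathlib

/-- The reconfiguration graph of a relation `R ⊆ A^r`: vertices are the tuples of `R`,
two tuples being adjacent iff they differ in exactly one coordinate. -/
def reconfGraph {A : Type*} {r : ℕ} (R : Set (Fin r → A)) : SimpleGraph R where
  Adj x y := ∃! i : Fin r, x.1 i ≠ y.1 i
  symm := by
    constructor
    rintro x y ⟨i, hi, hu⟩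
    exact ⟨i, Ne.symm hi, fun j hj => hu j (Ne.symm hj)⟩
  loopless := by
    constructor
    rintro x ⟨i, hi, -⟩
    exact hi rfl

private lemma urel_upd_mem {c k ℓ : ℕ} {x : Fin ℓ → Fin c}
    (hx : ∀ a, (Finset.univ.filter fun i => x i = a).card < k)
    {a : Fin c} (ha : (Finset.univ.filter fun i => x i = a).card < k - 1)
    (i : Fin ℓ) :
    ∀ b, (Finset.univ.filter fun j => Function.update x i a j = b).card < k := by
  intro b
  by_cases hb : a = b
  · subst hb
    have hsub : (Finset.univ.filter fun j => Function.update x i a j = a) ⊆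
        insert i (Finset.univ.filter fun j => x j = a) := by
      intro j hj
      simp only [Finset.mem_filter, Finset.mem_univ, true_and] at hj
      rcases eq_or_ne j i with rfl | hji
      · exact Finset.mem_insert_self _ _
      · rw [Function.update_of_ne hji] at hj
        exact Finset.mem_insert_of_mem (by simp [hj])
    have h1 := Finset.card_le_card hsub
    have h2 := Finset.card_insert_le i (Finset.univ.filter fun j => x j = a)
    omega
  · have hsub : (Finset.univ.filter fun j => Function.update x i a j = b) ⊆
        (Finset.univ.filter fun j => x j = b) := by
      intro j hj
      simp only [Finset.mem_filter, Finset.mem_univ, true_and] at hj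
      rcases eq_or_ne j i with rfl | hji
      · rw [Function.update_self] at hj
        exact absurd hj.symm (Ne.symm hb)
      · rw [Function.update_of_ne hji] at hj
        simp [hj]
    exact lt_of_le_of_lt (Finset.card_le_card hsub) (hx b)

private lemma urel_exists_light {c k ℓ : ℕ} (h : ℓ < c * (k - 1)) (x : Fin ℓ → Fin c) :
    ∃ b, (Finset.univ.filter fun i => x i = b).card < k - 1 := by
  by_contra hcon
  push_neg at hcon
  have hsum : ℓ = ∑ b : Fin c, (Finset.univ.filter fun i => x i = b).card := by
    have := Finset.card_eq_sum_card_fiberwise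
      (f := x) (s := (Finset.univ : Finset (Fin ℓ))) (t := Finset.univ)
      (fun i _ => Finset.mem_univ _)
    simpa using this
  have hle : c * (k - 1) ≤ ℓ := by
    rw [hsum]
    calc c * (k - 1) = ∑ _b : Fin c, (k - 1) := by simp [mul_comm]
    _ ≤ _ := Finset.sum_le_sum fun b _ => hcon b
  omega

private lemma urel_adj_upd {A : Type*} {r : ℕ} {R : Set (Fin r → A)} {x : Fin r → A}
    (hx : x ∈ R) {i : Fin r} {a : A} (ha : x i ≠ a) (hmem : Function.update x i a ∈ R) :
    (reconfGraph R).Adj ⟨x, hx⟩ ⟨Function.update x i a, hmem⟩ := by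
  refine ⟨i, by simpa using ha, fun j hj => ?_⟩
  by_contra hji
  have hj' : x j ≠ Function.update x i a j := hj
  rw [Function.update_of_ne hji] at hj'
  exact hj' rfl

private lemma urel_reach {c k ℓ : ℕ} (hk2 : 2 ≤ k) (h : ℓ < c * (k - 1)) :
    ∀ (n : ℕ) (x y : Fin ℓ → Fin c)
      (hx : ∀ a, (Finset.univ.filter fun i => x i = a).card < k)
      (hy : ∀ a, (Finset.univ.filter fun i => y i = a).card < k),
      (Finset.univ.filter fun i => x i ≠ y i).card ≤ n →
      (reconfGraph {x : Fin ℓ → Fin c |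
        ∀ a : Fin c, (Finset.univ.filter fun i => x i = a).card < k}).Reachable
        ⟨x, hx⟩ ⟨y, hy⟩ := by
  intro n
  induction n with
  | zero =>
    intro x y hx hy hd
    have hxy : x = y := by
      funext i
      by_contra hi
      have hmem : i ∈ Finset.univ.filter fun i => x i ≠ y i := by simp [hi]
      have := Finset.card_pos.mpr ⟨i, hmem⟩
      omega
    subst hxy
    rfl
  | succ n ih =>
    intro x y hx hy hd
    by_cases hxy : x = y
    · subst hxy; rfl
    · obtain ⟨i, hi⟩ : ∃ i, x i ≠ y i := by
        by_contra hcon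
        push_neg at hcon
        exact hxy (funext hcon)
      have hiD : i ∈ Finset.univ.filter fun i => x i ≠ y i := by simp [hi]
      have hDerase :
          ((Finset.univ.filter fun i => x i ≠ y i).erase i).card ≤ n := by
        have h1 := Finset.card_erase_of_mem hiD
        omega
      by_cases hcase : (Finset.univ.filter fun j => x j = y i).card < k - 1
      · -- direct move: set coordinate i to y i
        set x' := Function.update x i (y i) with hx'def
        have hx' := urel_upd_mem hx hcase i
        have step := urel_adj_upd (R := {x : Fin ℓ → Fin c |
          ∀ a : Fin c, (Finset.univ.filter fun i => x i = a).card < k}) hx hi hx'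
        have hd' : (Finset.univ.filter fun j => x' j ≠ y j).card ≤ n := by
          have hsub : (Finset.univ.filter fun j => x' j ≠ y j) ⊆
              (Finset.univ.filter fun i => x i ≠ y i).erase i := by
            intro j hj
            simp only [Finset.mem_filter, Finset.mem_univ, true_and] at hj
            rcases eq_or_ne j i with rfl | hji
            · exact absurd (by simp [hx'def]) hj
            · rw [hx'def, Function.update_of_ne hji] at hj
              exact Finset.mem_erase.mpr ⟨hji, by simp [hj]⟩
          exact le_trans (Finset.card_le_card hsub) hDerase
        exact step.reachable.trans (ih x' y hx' hy hd')
      · -- colour y i is saturated in x: first free a slot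
        have hcount : (Finset.univ.filter fun j => x j = y i).card = k - 1 := by
          have := hx (y i); omega
        obtain ⟨j, hj1, hj2⟩ : ∃ j, x j = y i ∧ y j ≠ y i := by
          by_contra hcon
          push_neg at hcon
          have hsub : (Finset.univ.filter fun j => x j = y i) ⊆
              (Finset.univ.filter fun j => y j = y i).erase i := by
            intro j hj
            simp only [Finset.mem_filter, Finset.mem_univ, true_and] at hj
            refine Finset.mem_erase.mpr ⟨?_, by simp [hcon j hj]⟩
            rintro rfl
            exact hi hj
          have h1 := Finset.card_le_card hsub
          have h2 : ((Finset.univ.filter fun j => y j = y i).erase i).card =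
              (Finset.univ.filter fun j => y j = y i).card - 1 :=
            Finset.card_erase_of_mem (by simp)
          have h3 := hy (y i)
          have h4 : 0 < (Finset.univ.filter fun j => y j = y i).card :=
            Finset.card_pos.mpr ⟨i, by simp⟩
          omega
        obtain ⟨b, hb⟩ := urel_exists_light h x
        have hbne : b ≠ y i := by
          rintro rfl; omega
        have hji : j ≠ i := by
          rintro rfl; exact hi hj1
        have hxjb : x j ≠ b := by
          rw [hj1]; exact fun e => hbne e.symm
        set x' := Function.update x j b with hx'def
        have hx' := urel_upd_mem hx hb j
        have step1 := urel_adj_upd (R := {x : Fin ℓ → Fin c |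
          ∀ a : Fin c, (Finset.univ.filter fun i => x i = a).card < k}) hx hxjb hx'
        -- in x', colour y i has count k - 2
        have hcount' : (Finset.univ.filter fun m => x' m = y i).card < k - 1 := by
          have heq : (Finset.univ.filter fun m => x' m = y i) =
              (Finset.univ.filter fun m => x m = y i).erase j := by
            ext m
            simp only [Finset.mem_filter, Finset.mem_univ, true_and, Finset.mem_erase]
            constructor
            · intro hm
              rcases eq_or_ne m j with rfl | hmj
              · rw [hx'def, Function.update_self] at hm
                exact absurd hm hbne
              · rw [hx'def, Function.update_of_ne hmj] at hm
                exact ⟨hmj, hm⟩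
            · rintro ⟨hmj, hm⟩
              rw [hx'def, Function.update_of_ne hmj]
              exact hm
          rw [heq, Finset.card_erase_of_mem (by simp [hj1]), hcount]
          omega
        have hx'i : x' i ≠ y i := by
          rw [hx'def, Function.update_of_ne (Ne.symm hji)]
          exact hi
        set x'' := Function.update x' i (y i) with hx''def
        have hx'' := urel_upd_mem hx' hcount' i
        have step2 := urel_adj_upd (R := {x : Fin ℓ → Fin c |
          ∀ a : Fin c, (Finset.univ.filter fun i => x i = a).card < k}) hx' hx'i hx''
        have hd'' : (Finset.univ.filter fun m => x'' m ≠ y m).card ≤ n := by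
          have hsub : (Finset.univ.filter fun m => x'' m ≠ y m) ⊆
              (Finset.univ.filter fun i => x i ≠ y i).erase i := by
            intro m hm
            simp only [Finset.mem_filter, Finset.mem_univ, true_and] at hm
            rcases eq_or_ne m i with rfl | hmi
            · exact absurd (by simp [hx''def]) hm
            · refine Finset.mem_erase.mpr ⟨hmi, ?_⟩
              rw [hx''def, Function.update_of_ne hmi] at hm
              rcases eq_or_ne m j with rfl | hmj
              · have : x m ≠ y m := by rw [hj1]; exact Ne.symm hj2
                simp [this]
              · rw [hx'def, Function.update_of_ne hmj] at hm
                simp [hm]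
          exact le_trans (Finset.card_le_card hsub) hDerase
        exact (step1.reachable.trans step2.reachable).trans (ih x'' y hx'' hy hd'')

/-- If `ℓ < c·(k-1)`, then the relation `U(c,k,ℓ)` (tuples `x : Fin ℓ → Fin c` in which
every colour appears fewer than `k` times) is reconfigurable. -/
theorem urel_reconfigurable (c k ℓ : ℕ) (hc : 0 < c) (hk : 0 < k) (hl : 0 < ℓ)
    (h : ℓ < c * (k - 1)) :
    (reconfGraph {x : Fin ℓ → Fin c |
      ∀ a : Fin c, (Finset.univ.filter fun i => x i = a).card < k}).Connected := by
  have hk2 : 2 ≤ k := by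
    rcases Nat.lt_or_ge k 2 with hlt | hge
    · interval_cases k <;> simp_all
    · exact hge
  -- a balanced tuple is in the set
  have hx0 : ∀ a : Fin c,
      (Finset.univ.filter fun i : Fin ℓ => (⟨i.val % c, Nat.mod_lt _ hc⟩ : Fin c) = a).card < k := by
    intro a
    have hinj : Set.InjOn (fun i : Fin ℓ => i.val / c)
        ↑(Finset.univ.filter fun i : Fin ℓ => (⟨i.val % c, Nat.mod_lt _ hc⟩ : Fin c) = a) := by
      intro i hi j hj hij
      simp only [Finset.coe_filter, Finset.mem_univ, true_and, Set.mem_setOf_eq] at hi hj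
      have hmod : i.val % c = j.val % c := by
        simpa using congrArg Fin.val (hi.trans hj.symm)
      have hdiv : i.val / c = j.val / c := by simpa using hij
      have h1 := Nat.div_add_mod i.val c
      have h2 := Nat.div_add_mod j.val c
      rw [← hdiv, ← hmod] at h2
      exact Fin.ext (by omega)
    have hmaps : ∀ i ∈ Finset.univ.filter
        (fun i : Fin ℓ => (⟨i.val % c, Nat.mod_lt _ hc⟩ : Fin c) = a),
        i.val / c ∈ Finset.range (k - 1) := by
      intro i _
      rw [Finset.mem_range, Nat.div_lt_iff_lt_mul hc, mul_comm]
      exact lt_trans i.isLt h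
    have := Finset.card_le_card_of_injOn (fun i : Fin ℓ => i.val / c) hmaps hinj
    rw [Finset.card_range] at this
    omega
  rw [SimpleGraph.connected_iff]
  constructor
  · rintro ⟨x, hx⟩ ⟨y, hy⟩
    exact urel_reach hk2 h _ x y hx hy le_rfl
  · exact ⟨⟨fun i => ⟨i.val % c, Nat.mod_lt _ hc⟩, hx0⟩⟩
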